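/- arXiv:2203.03517 — 3 statements merged into one kernel-verified Lean document; each statement's English description precedes it below -/
import Mathlib

section
/- With the notation of the Ostrowski expansion, if b_ℓ ≥ 1 then −1/a_{ℓ+1} ≤ −q_ℓ δ_ℓ ≤ ε_ℓ(N) ≤ q_ℓ δ_{ℓ+1} ≤ 1/a_{ℓ+1}, where ε_ℓ(N) = q_ℓ ∑_{k=ℓ+1}^{K−1} (−1)^{k+ℓ} b_k δ_k. -/
open Real Filter MeasureTheory

/-- Gauss map -/
noncomputable def gaussMap (x : ℝ) : ℝ := Int.fract x⁻¹

/-- Continued fraction partial quotients of α ∈ (0,1): `cfA α k` is `a_k` for `k ≥ 1`. -/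
noncomputable def cfA (α : ℝ) : ℕ → ℕ
  | 0 => 0
  | n + 1 => (⌊(gaussMap^[n] α)⁻¹⌋).toNat

/-- Denominators of the convergents: `q_0 = 1`, `q_1 = a_1`, `q_{k+2} = a_{k+2} q_{k+1} + q_k`. -/
noncomputable def cfQ (α : ℝ) : ℕ → ℕ
  | 0 => 1
  | 1 => cfA α 1
  | n + 2 => cfA α (n + 2) * cfQ α (n + 1) + cfQ α n

/-- Numerators of the convergents. -/
noncomputable def cfP (α : ℝ) : ℕ → ℤ
  | 0 => 0
  | 1 => 1
  | n + 2 => cfA α (n + 2) * cfP α (n + 1) + cfP α n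

/-- `δ_k = |q_k α - p_k| = ‖q_k α‖`. -/
noncomputable def cfDelta (α : ℝ) (k : ℕ) : ℝ := |(cfQ α k : ℝ) * α - (cfP α k : ℝ)|

/-- Sudler product `P_N(α) = ∏_{r=1}^N |2 sin(π r α)|`. -/
noncomputable def sudler (α : ℝ) (N : ℕ) : ℝ :=
  ∏ r ∈ Finset.Icc 1 N, |2 * Real.sin (Real.pi * r * α)|

/-- Ostrowski digit conditions for a digit sequence `b` of length `K` w.r.t. `α`. -/
def IsOstrowski (α : ℝ) (K : ℕ) (b : ℕ → ℕ) (N : ℕ) : Prop :=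
  N = ∑ ℓ ∈ Finset.range K, b ℓ * cfQ α ℓ ∧
  (∀ ℓ < K, b ℓ ≤ cfA α (ℓ + 1)) ∧
  b 0 < cfA α 1 ∧
  (∀ ℓ, 1 ≤ ℓ → ℓ < K → b ℓ = cfA α (ℓ + 1) → b (ℓ - 1) = 0)

/-- `ε_ℓ(N) = q_ℓ ∑_{k=ℓ+1}^{K-1} (-1)^{k+ℓ} b_k δ_k`. -/
noncomputable def cfEps (α : ℝ) (K : ℕ) (b : ℕ → ℕ) (ℓ : ℕ) : ℝ :=
  (cfQ α ℓ : ℝ) * ∑ k ∈ Finset.Ico (ℓ + 1) K, (-1 : ℝ) ^ (k + ℓ) * (b k : ℝ) * cfDelta α k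

set_option linter.unusedSectionVars false
noncomputable def xseq (α : ℝ) (n : ℕ) : ℝ := gaussMap^[n] α

lemma xseq_succ (α : ℝ) (n : ℕ) : xseq α (n+1) = Int.fract (xseq α n)⁻¹ := by
  simp [xseq, Function.iterate_succ_apply', gaussMap]

lemma xseq_prop {α : ℝ} (hα : α ∈ Set.Ioo (0:ℝ) 1) (hirr : Irrational α) :
    ∀ n, Irrational (xseq α n) ∧ xseq α n ∈ Set.Ioo (0:ℝ) 1 := by
  intro n
  induction n with
  | zero => exact ⟨hirr, hα⟩
  | succ n ih =>
    obtain ⟨hir, h0, h1⟩ := ih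
    have hfr : Irrational (Int.fract (xseq α n)⁻¹) := by
      rw [Int.fract]; exact hir.inv.sub_intCast _
    refine ⟨(xseq_succ α n) ▸ hfr, ?_, ?_⟩
    · rw [xseq_succ]
      exact lt_of_le_of_ne (Int.fract_nonneg _) (Ne.symm (by simpa using hfr.ne_int 0))
    · rw [xseq_succ]; exact Int.fract_lt_one _





noncomputable def dseq (α : ℝ) (n : ℕ) : ℝ := ∏ i ∈ Finset.range (n+1), xseq α i

section
variable {α : ℝ} (hα : α ∈ Set.Ioo (0:ℝ) 1) (hirr : Irrational α)
include hα hirr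

lemma xseq_pos (n : ℕ) : 0 < xseq α n := ((xseq_prop hα hirr n).2).1

lemma xseq_lt_one (n : ℕ) : xseq α n < 1 := ((xseq_prop hα hirr n).2).2

lemma floor_inv_pos (n : ℕ) : 1 ≤ ⌊(xseq α n)⁻¹⌋ := by
  have h0 := xseq_pos hα hirr n
  have h1 := xseq_lt_one hα hirr n
  have : (1:ℝ) ≤ (xseq α n)⁻¹ := (one_le_inv_iff₀.mpr ⟨h0, le_of_lt h1⟩)
  exact_mod_cast Int.le_floor.mpr (by exact_mod_cast this)

lemma cfA_pos (n : ℕ) : 1 ≤ cfA α (n+1) := by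
  have h := floor_inv_pos hα hirr n
  show 1 ≤ (⌊(gaussMap^[n] α)⁻¹⌋).toNat
  have : xseq α n = gaussMap^[n] α := rfl
  rw [this] at h
  omega

lemma cfA_cast (n : ℕ) : ((cfA α (n+1) : ℕ) : ℝ) = (⌊(xseq α n)⁻¹⌋ : ℝ) := by
  have h := floor_inv_pos hα hirr n
  show ((⌊(gaussMap^[n] α)⁻¹⌋).toNat : ℝ) = _
  have hx : xseq α n = gaussMap^[n] α := rfl
  rw [← hx]
  exact_mod_cast Int.toNat_of_nonneg (by omega)

lemma xseq_step (n : ℕ) : xseq α (n+1) = (xseq α n)⁻¹ - cfA α (n+1) := by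
  rw [xseq_succ, Int.fract, cfA_cast hα hirr]

lemma dseq_succ (n : ℕ) : dseq α (n+1) = dseq α n * xseq α (n+1) := by
  rw [dseq, dseq, Finset.prod_range_succ]

lemma dseq_pos (n : ℕ) : 0 < dseq α n :=
  Finset.prod_pos fun i _ => xseq_pos hα hirr i

lemma dseq_lt (n : ℕ) : dseq α (n+1) < dseq α n := by
  rw [dseq_succ hα hirr]
  nth_rewrite 2 [← mul_one (dseq α n)]
  exact mul_lt_mul_of_pos_left (xseq_lt_one hα hirr _) (dseq_pos hα hirr n)

lemma dseq_rec (n : ℕ) : dseq α (n+2) = dseq α n - cfA α (n+2) * dseq α (n+1) := by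
  have hx : xseq α (n+1) ≠ 0 := ne_of_gt (xseq_pos hα hirr _)
  rw [dseq_succ hα hirr (n+1), xseq_step hα hirr (n+1), mul_sub]
  rw [dseq_succ hα hirr n]
  field_simp

lemma theta (n : ℕ) : (cfQ α n : ℝ) * α - (cfP α n : ℝ) = (-1)^n * dseq α n := by
  induction n using Nat.strong_induction_on with
  | _ n ih =>
    match n with
    | 0 => simp [cfQ, cfP, dseq, xseq]
    | 1 =>
      have hx : xseq α 0 = α := rfl
      have hne : α ≠ 0 := ne_of_gt hα.1
      have h1 : xseq α 1 = α⁻¹ - cfA α 1 := by rw [xseq_step hα hirr 0, hx]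
      simp only [cfQ, cfP]
      rw [show dseq α 1 = xseq α 0 * xseq α 1 by
        simp [dseq, Finset.prod_range_succ]]
      rw [hx, h1]
      field_simp
      ring
    | (m+2) =>
      have h1 := ih (m+1) (by omega)
      have h0 := ih m (by omega)
      have hrec := dseq_rec hα hirr m
      simp only [cfQ, cfP]
      push_cast
      have : ((cfA α (m+2) : ℝ) * cfQ α (m+1) + cfQ α m) * α -
          ((cfA α (m+2) : ℝ) * cfP α (m+1) + cfP α m)
          = (cfA α (m+2) : ℝ) * ((cfQ α (m+1) : ℝ) * α - cfP α (m+1))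
            + ((cfQ α m : ℝ) * α - cfP α m) := by ring
      rw [this, h1, h0, hrec]
      ring

lemma cfDelta_eq (n : ℕ) : cfDelta α n = dseq α n := by
  rw [cfDelta, theta hα hirr, abs_mul, abs_pow, abs_neg, abs_one, one_pow, one_mul,
    abs_of_pos (dseq_pos hα hirr n)]

lemma cfDelta_pos (n : ℕ) : 0 < cfDelta α n := by
  rw [cfDelta_eq hα hirr]; exact dseq_pos hα hirr n

lemma cfDelta_lt (n : ℕ) : cfDelta α (n+1) < cfDelta α n := by
  rw [cfDelta_eq hα hirr, cfDelta_eq hα hirr]; exact dseq_lt hα hirr n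

lemma cfDelta_rec (n : ℕ) :
    cfDelta α (n+2) = cfDelta α n - cfA α (n+2) * cfDelta α (n+1) := by
  simp only [cfDelta_eq hα hirr]; exact dseq_rec hα hirr n

lemma cfQ_pos (n : ℕ) : 1 ≤ cfQ α n := by
  induction n using Nat.strong_induction_on with
  | _ n ih =>
    match n with
    | 0 => simp [cfQ]
    | 1 => simpa [cfQ] using cfA_pos hα hirr 0
    | (m+2) =>
      have := ih m (by omega)
      simp only [cfQ]
      omega

lemma cfQ_mul_le (n : ℕ) : cfA α (n+1) * cfQ α n ≤ cfQ α (n+1) := by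
  match n with
  | 0 => simp [cfQ]
  | (m+1) =>
    show cfA α (m+2) * cfQ α (m+1) ≤ cfA α (m+2) * cfQ α (m+1) + cfQ α m
    omega

lemma key_identity (n : ℕ) :
    (cfQ α (n+1) : ℝ) * cfDelta α n + (cfQ α n : ℝ) * cfDelta α (n+1) = 1 := by
  induction n with
  | zero =>
    have hne : α ≠ 0 := ne_of_gt hα.1
    have hx : xseq α 0 = α := rfl
    have h1 : xseq α 1 = α⁻¹ - cfA α 1 := by rw [xseq_step hα hirr 0, hx]
    simp only [cfDelta_eq hα hirr, cfQ]
    rw [show dseq α 1 = xseq α 0 * xseq α 1 by simp [dseq, Finset.prod_range_succ],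
      show dseq α 0 = α by simp [dseq, xseq], hx, h1]
    field_simp
    ring
  | succ n ih =>
    have hrec := cfDelta_rec hα hirr n
    have hq : (cfQ α (n+2) : ℝ) = cfA α (n+2) * cfQ α (n+1) + cfQ α n := by
      simp only [cfQ]; push_cast; ring
    rw [hq, hrec, ← ih]
    ring

lemma sum_bounds (K : ℕ) (b : ℕ → ℕ) (hbb : ∀ ℓ < K, b ℓ ≤ cfA α (ℓ + 1)) :
    ∀ j ℓ, K ≤ ℓ + j →
      -(cfDelta α ℓ) ≤ (∑ k ∈ Finset.Ico (ℓ+1) K, (-1:ℝ)^(k+ℓ) * (b k : ℝ) * cfDelta α k) ∧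
      (∑ k ∈ Finset.Ico (ℓ+1) K, (-1:ℝ)^(k+ℓ) * (b k : ℝ) * cfDelta α k) ≤ cfDelta α (ℓ+1) := by
  intro j
  induction j with
  | zero =>
    intro ℓ h
    rw [Finset.Ico_eq_empty (by omega), Finset.sum_empty]
    exact ⟨by linarith [cfDelta_pos hα hirr ℓ], (cfDelta_pos hα hirr (ℓ+1)).le⟩
  | succ j ih =>
    intro ℓ h
    by_cases hK : K ≤ ℓ + 1
    · rw [Finset.Ico_eq_empty (by omega), Finset.sum_empty]
      exact ⟨by linarith [cfDelta_pos hα hirr ℓ], (cfDelta_pos hα hirr (ℓ+1)).le⟩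
    · push_neg at hK
      obtain ⟨l1, u1⟩ := ih (ℓ+1) (by omega)
      have hterm : ∀ k, (-1:ℝ)^(k+ℓ) * (b k : ℝ) * cfDelta α k
          = -((-1:ℝ)^(k+(ℓ+1)) * (b k : ℝ) * cfDelta α k) := by
        intro k
        rw [show k+(ℓ+1) = (k+ℓ)+1 by ring, pow_succ]
        ring
      have hdecomp : (∑ k ∈ Finset.Ico (ℓ+1) K, (-1:ℝ)^(k+ℓ) * (b k : ℝ) * cfDelta α k)
          = -((b (ℓ+1) : ℝ) * cfDelta α (ℓ+1))
            - (∑ k ∈ Finset.Ico (ℓ+2) K, (-1:ℝ)^(k+(ℓ+1)) * (b k : ℝ) * cfDelta α k) := by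
        rw [Finset.sum_eq_sum_Ico_succ_bot hK]
        rw [show (-1:ℝ)^(ℓ+1+ℓ) = -1 from Odd.neg_one_pow ⟨ℓ, by ring⟩]
        rw [Finset.sum_congr rfl (fun k _ => hterm k), Finset.sum_neg_distrib]
        ring
      have hd1 := cfDelta_pos hα hirr (ℓ+1)
      have hd2 := cfDelta_pos hα hirr (ℓ+2)
      have hrec := cfDelta_rec hα hirr ℓ
      have hba : (b (ℓ+1) : ℝ) ≤ (cfA α (ℓ+2) : ℝ) := by
        exact_mod_cast hbb (ℓ+1) hK
      have hb0 : (0:ℝ) ≤ (b (ℓ+1) : ℝ) := Nat.cast_nonneg _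
      constructor
      · rw [hdecomp]
        have : (b (ℓ+1) : ℝ) * cfDelta α (ℓ+1) ≤ (cfA α (ℓ+2) : ℝ) * cfDelta α (ℓ+1) :=
          mul_le_mul_of_nonneg_right hba hd1.le
        linarith
      · rw [hdecomp]
        nlinarith

end

theorem eps_bounds_refined (α : ℝ) (hα : α ∈ Set.Ioo (0:ℝ) 1) (hirr : Irrational α)
    (K N : ℕ) (b : ℕ → ℕ) (hb : IsOstrowski α K b N) :
    ∀ ℓ < K, 1 ≤ b ℓ →
      -(1 / (cfA α (ℓ+1) : ℝ)) ≤ -((cfQ α ℓ : ℝ) * cfDelta α ℓ) ∧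
      -((cfQ α ℓ : ℝ) * cfDelta α ℓ) ≤ cfEps α K b ℓ ∧
      cfEps α K b ℓ ≤ (cfQ α ℓ : ℝ) * cfDelta α (ℓ+1) ∧
      (cfQ α ℓ : ℝ) * cfDelta α (ℓ+1) ≤ 1 / (cfA α (ℓ+1) : ℝ) := by
  obtain ⟨-, hbb, -, -⟩ := hb
  intro ℓ hℓ _
  have ha1 : (1:ℝ) ≤ (cfA α (ℓ+1) : ℝ) := by exact_mod_cast cfA_pos hα hirr ℓ
  have hapos : (0:ℝ) < (cfA α (ℓ+1) : ℝ) := by linarith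
  have haq : (cfA α (ℓ+1) : ℝ) * (cfQ α ℓ : ℝ) ≤ (cfQ α (ℓ+1) : ℝ) := by
    exact_mod_cast cfQ_mul_le hα hirr ℓ
  have hq0 : (0:ℝ) ≤ (cfQ α ℓ : ℝ) := Nat.cast_nonneg _
  have hq1 : (0:ℝ) ≤ (cfQ α (ℓ+1) : ℝ) := Nat.cast_nonneg _
  have hid := key_identity hα hirr ℓ
  have hd0 := cfDelta_pos hα hirr ℓ
  have hd1 := cfDelta_pos hα hirr (ℓ+1)
  have hlt := (cfDelta_lt hα hirr ℓ).le
  have houter0 : (cfQ α ℓ : ℝ) * cfDelta α ℓ ≤ 1 / (cfA α (ℓ+1) : ℝ) := by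
    rw [le_div_iff₀ hapos]
    nlinarith [mul_le_mul_of_nonneg_right haq hd0.le, mul_nonneg hq0 hd1.le]
  have houter1 : (cfQ α ℓ : ℝ) * cfDelta α (ℓ+1) ≤ 1 / (cfA α (ℓ+1) : ℝ) := by
    rw [le_div_iff₀ hapos]
    nlinarith [mul_le_mul_of_nonneg_right haq hd1.le,
      mul_le_mul_of_nonneg_left hlt hq1, mul_nonneg hq0 hd1.le]
  obtain ⟨hl, hu⟩ := sum_bounds hα hirr K b hbb K ℓ (by omega)
  have heps : cfEps α K b ℓ
      = (cfQ α ℓ : ℝ) * ∑ k ∈ Finset.Ico (ℓ+1) K, (-1:ℝ)^(k+ℓ) * (b k : ℝ) * cfDelta α k := rfl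
  refine ⟨by linarith, ?_, ?_, houter1⟩
  · calc -((cfQ α ℓ : ℝ) * cfDelta α ℓ) = (cfQ α ℓ : ℝ) * (-(cfDelta α ℓ)) := by ring
      _ ≤ _ := by rw [heps]; exact mul_le_mul_of_nonneg_left hl hq0
  · rw [heps]; exact mul_le_mul_of_nonneg_left hu hq0
end

section
/- Fix K ≥ 1 and an index ℓ₀ with 1 ≤ ℓ₀ ≤ K. For N < q_K with Ostrowski digits (b_0, …, b_{K−1}), let M⁺ = {N ≤ M : b_{ℓ₀−1}(N) ≥ a_{ℓ₀}/2} and M⁻ = {N ≤ M : b_{ℓ₀−1}(N) ≤ a_{ℓ₀}/2} for a fixed integer M with q_{K−1} ≤ M < q_K. Then the map sending N = ∑ b_ℓ q_ℓ ∈ M⁺ to ∑ b̃_ℓ q_ℓ, where b̃_{ℓ₀−1} = a_{ℓ₀} − b_{ℓ₀−1} and b̃_ℓ = b_ℓ otherwise, is a well-defined injection from M⁺ into M⁻; consequently |M⁻| ≥ M/2. -/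
open Real Filter MeasureTheory

lemma my_gauss_iter {α : ℝ} (h : Irrational α) (hx : α ∈ Set.Ioo (0:ℝ) 1) (n : ℕ) :
    Irrational (gaussMap^[n] α) ∧ gaussMap^[n] α ∈ Set.Ioo (0:ℝ) 1 := by
  induction n with
  | zero => exact ⟨h, hx⟩
  | succ n ih =>
    obtain ⟨hi, h0, h1⟩ := ih
    rw [Function.iterate_succ_apply']
    set x := gaussMap^[n] α
    have hfr : Irrational (gaussMap x) := by
      unfold gaussMap Int.fract
      exact Irrational.sub_intCast (Irrational.inv hi) _
    refine ⟨hfr, ?_, ?_⟩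
    · exact lt_of_le_of_ne (Int.fract_nonneg x⁻¹) (Ne.symm hfr.ne_zero)
    · exact Int.fract_lt_one _

lemma my_cfA_pos {α : ℝ} (h : Irrational α) (hx : α ∈ Set.Ioo (0:ℝ) 1) {k : ℕ} (hk : 1 ≤ k) :
    1 ≤ cfA α k := by
  obtain ⟨n, rfl⟩ : ∃ n, k = n + 1 := ⟨k - 1, by omega⟩
  obtain ⟨hi, h0, h1⟩ := my_gauss_iter h hx n
  show 1 ≤ (⌊(gaussMap^[n] α)⁻¹⌋).toNat
  have : (1:ℝ) ≤ (gaussMap^[n] α)⁻¹ := le_of_lt ((one_lt_inv₀ h0).mpr h1)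
  have : (1:ℤ) ≤ ⌊(gaussMap^[n] α)⁻¹⌋ := by
    exact_mod_cast Int.le_floor.mpr (by exact_mod_cast this)
  omega

lemma my_cfQ_pos {α : ℝ} (hA : 1 ≤ cfA α 1) : ∀ k, 1 ≤ cfQ α k := by
  intro k
  induction k using Nat.strong_induction_on with
  | _ k ih =>
    match k with
    | 0 => simp [cfQ]
    | 1 => simpa [cfQ] using hA
    | m + 2 =>
      have := ih m (by omega)
      simp only [cfQ]
      omega

lemma my_sum_lt {α : ℝ} (hA : ∀ j, 1 ≤ j → 1 ≤ cfA α j) :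
    ∀ k (b : ℕ → ℕ), (∀ ℓ < k, b ℓ ≤ cfA α (ℓ+1)) → b 0 < cfA α 1 →
    (∀ ℓ, 1 ≤ ℓ → ℓ < k → b ℓ = cfA α (ℓ+1) → b (ℓ-1) = 0) →
    ∑ ℓ ∈ Finset.range k, b ℓ * cfQ α ℓ < cfQ α k := by
  intro k
  induction k using Nat.strong_induction_on with
  | _ k ih =>
    intro b h1 h2 h3
    match k with
    | 0 => simp [cfQ]
    | 1 => simpa [cfQ] using h2
    | m + 2 =>
      have hq : cfQ α (m+2) = cfA α (m+2) * cfQ α (m+1) + cfQ α m := by simp [cfQ]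
      rw [Finset.sum_range_succ, hq]
      rcases eq_or_lt_of_le (h1 (m+1) (by omega)) with heq | hlt
      · have hb0 : b m = 0 := h3 (m+1) (by omega) (by omega) heq
        have hsum : ∑ ℓ ∈ Finset.range (m+1), b ℓ * cfQ α ℓ
            = ∑ ℓ ∈ Finset.range m, b ℓ * cfQ α ℓ := by
          rw [Finset.sum_range_succ, hb0]; ring
        have hm : ∑ ℓ ∈ Finset.range m, b ℓ * cfQ α ℓ < cfQ α m :=
          ih m (by omega) b (fun ℓ hℓ => h1 ℓ (by omega)) h2
            (fun ℓ hℓ1 hℓ2 => h3 ℓ hℓ1 (by omega))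
        rw [hsum, heq]
        linarith
      · have hm1 : ∑ ℓ ∈ Finset.range (m+1), b ℓ * cfQ α ℓ < cfQ α (m+1) :=
          ih (m+1) (by omega) b (fun ℓ hℓ => h1 ℓ (by omega)) h2
            (fun ℓ hℓ1 hℓ2 => h3 ℓ hℓ1 (by omega))
        have h4 : b (m+1) * cfQ α (m+1) + cfQ α (m+1) ≤ cfA α (m+2) * cfQ α (m+1) := by
          calc b (m+1) * cfQ α (m+1) + cfQ α (m+1) = (b (m+1) + 1) * cfQ α (m+1) := by ring
          _ ≤ cfA α (m+2) * cfQ α (m+1) := Nat.mul_le_mul_right _ hlt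
        have := my_cfQ_pos (hA 1 le_rfl) m
        linarith

lemma my_unique {α : ℝ} (hA : ∀ j, 1 ≤ j → 1 ≤ cfA α j) :
    ∀ k (b c : ℕ → ℕ),
    (∀ ℓ < k, b ℓ ≤ cfA α (ℓ+1)) → b 0 < cfA α 1 →
    (∀ ℓ, 1 ≤ ℓ → ℓ < k → b ℓ = cfA α (ℓ+1) → b (ℓ-1) = 0) →
    (∀ ℓ < k, c ℓ ≤ cfA α (ℓ+1)) → c 0 < cfA α 1 →
    (∀ ℓ, 1 ≤ ℓ → ℓ < k → c ℓ = cfA α (ℓ+1) → c (ℓ-1) = 0) →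
    (∑ ℓ ∈ Finset.range k, b ℓ * cfQ α ℓ = ∑ ℓ ∈ Finset.range k, c ℓ * cfQ α ℓ) →
    ∀ ℓ < k, b ℓ = c ℓ := by
  intro k
  induction k with
  | zero => intro b c _ _ _ _ _ _ _ ℓ hℓ; omega
  | succ m ih =>
    intro b c hb1 hb2 hb3 hc1 hc2 hc3 hsum
    have hbm : ∑ ℓ ∈ Finset.range m, b ℓ * cfQ α ℓ < cfQ α m :=
      my_sum_lt hA m b (fun ℓ hℓ => hb1 ℓ (by omega)) hb2
        (fun ℓ h1 h2 => hb3 ℓ h1 (by omega))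
    have hcm : ∑ ℓ ∈ Finset.range m, c ℓ * cfQ α ℓ < cfQ α m :=
      my_sum_lt hA m c (fun ℓ hℓ => hc1 ℓ (by omega)) hc2
        (fun ℓ h1 h2 => hc3 ℓ h1 (by omega))
    rw [Finset.sum_range_succ, Finset.sum_range_succ] at hsum
    have htop : b m = c m := by
      rcases lt_trichotomy (b m) (c m) with h | h | h
      · exfalso
        have h5 : b m * cfQ α m + cfQ α m ≤ c m * cfQ α m := by
          calc b m * cfQ α m + cfQ α m = (b m + 1) * cfQ α m := by ring
          _ ≤ c m * cfQ α m := Nat.mul_le_mul_right _ h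
        generalize hX : b m * cfQ α m = X at hsum h5
        generalize hY : c m * cfQ α m = Y at hsum h5
        generalize hq : cfQ α m = q at hbm hcm h5
        omega
      · exact h
      · exfalso
        have h5 : c m * cfQ α m + cfQ α m ≤ b m * cfQ α m := by
          calc c m * cfQ α m + cfQ α m = (c m + 1) * cfQ α m := by ring
          _ ≤ b m * cfQ α m := Nat.mul_le_mul_right _ h
        generalize hX : b m * cfQ α m = X at hsum h5
        generalize hY : c m * cfQ α m = Y at hsum h5
        generalize hq : cfQ α m = q at hbm hcm h5
        omega
    rw [htop] at hsum
    have hrest := ih b c (fun ℓ hℓ => hb1 ℓ (by omega)) hb2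
      (fun ℓ h1 h2 => hb3 ℓ h1 (by omega))
      (fun ℓ hℓ => hc1 ℓ (by omega)) hc2
      (fun ℓ h1 h2 => hc3 ℓ h1 (by omega))
      (Nat.add_right_cancel hsum)
    intro ℓ hℓ
    rcases Nat.lt_or_ge ℓ m with h | h
    · exact hrest ℓ h
    · have : ℓ = m := by omega
      rw [this, htop]

lemma my_reflect {α : ℝ} (hα : α ∈ Set.Ioo (0:ℝ) 1) (hirr : Irrational α)
    (K ℓ₀ M : ℕ) (hK : 1 ≤ K) (hℓ₀ : 1 ≤ ℓ₀) (hℓ₀K : ℓ₀ ≤ K)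
    (b : ℕ → ℕ → ℕ) (hb : ∀ N ≤ M, IsOstrowski α K (b N) N)
    (N : ℕ) (hN : N ≤ M) (hge : cfA α ℓ₀ ≤ 2 * b N (ℓ₀ - 1))
    (c : ℕ → ℕ) (hcdef : ∀ ℓ, c ℓ = if ℓ = ℓ₀ - 1 then cfA α ℓ₀ - b N ℓ else b N ℓ) :
    (∑ ℓ ∈ Finset.range K, c ℓ * cfQ α ℓ) ≤ M ∧
    ∀ ℓ < K, b (∑ ℓ ∈ Finset.range K, c ℓ * cfQ α ℓ) ℓ = c ℓ := by
  have hA : ∀ j, 1 ≤ j → 1 ≤ cfA α j := fun j hj => my_cfA_pos hirr hα hj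
  obtain ⟨hNsum, hb1, hb2, hb3⟩ := hb N hN
  have hl0K : ℓ₀ - 1 < K := by omega
  have haℓ₀ : 1 ≤ cfA α ℓ₀ := hA ℓ₀ hℓ₀
  have hble : b N (ℓ₀ - 1) ≤ cfA α ℓ₀ := by
    have := hb1 (ℓ₀ - 1) hl0K
    rwa [Nat.sub_add_cancel hℓ₀] at this
  have hbpos : 1 ≤ b N (ℓ₀ - 1) := by omega
  have hfle : (∑ ℓ ∈ Finset.range K, c ℓ * cfQ α ℓ) ≤ N := by
    rw [hNsum]
    apply Finset.sum_le_sum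
    intro ℓ _
    apply Nat.mul_le_mul_right
    rw [hcdef ℓ]
    by_cases h : ℓ = ℓ₀ - 1
    · rw [if_pos h, h]; omega
    · rw [if_neg h]
  set F := ∑ ℓ ∈ Finset.range K, c ℓ * cfQ α ℓ with hF
  have hFM : F ≤ M := le_trans hfle hN
  refine ⟨hFM, ?_⟩
  obtain ⟨hFsum, hF1, hF2, hF3⟩ := hb F hFM
  have c1 : ∀ ℓ < K, c ℓ ≤ cfA α (ℓ + 1) := by
    intro ℓ hℓ
    rw [hcdef ℓ]
    by_cases h : ℓ = ℓ₀ - 1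
    · rw [if_pos h, h, Nat.sub_add_cancel hℓ₀]; exact Nat.sub_le _ _
    · rw [if_neg h]; exact hb1 ℓ hℓ
  have c2 : c 0 < cfA α 1 := by
    rw [hcdef 0]
    by_cases h : (0:ℕ) = ℓ₀ - 1
    · rw [if_pos h]
      have hℓ1 : ℓ₀ = 1 := by omega
      rw [← h] at hbpos
      rw [hℓ1]; rw [hℓ1] at haℓ₀; omega
    · rw [if_neg h]; exact hb2
  have c3 : ∀ ℓ, 1 ≤ ℓ → ℓ < K → c ℓ = cfA α (ℓ + 1) → c (ℓ - 1) = 0 := by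
    intro ℓ h1 h2 heqa
    rw [hcdef ℓ] at heqa
    by_cases hl : ℓ = ℓ₀ - 1
    · exfalso
      rw [if_pos hl, hl, Nat.sub_add_cancel hℓ₀] at heqa
      omega
    · rw [if_neg hl] at heqa
      by_cases hl' : ℓ - 1 = ℓ₀ - 1
      · exfalso
        have h0 := hb3 ℓ h1 h2 heqa
        rw [hl'] at h0
        omega
      · rw [hcdef (ℓ - 1), if_neg hl']
        exact hb3 ℓ h1 h2 heqa
  have := my_unique hA K (b F) c hF1 hF2 hF3 c1 c2 c3 (hFsum ▸ rfl)
  exact this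

theorem ostrowski_reflection_injection (α : ℝ) (hα : α ∈ Set.Ioo (0:ℝ) 1)
    (hirr : Irrational α) (K ℓ₀ M : ℕ) (hK : 1 ≤ K) (hℓ₀ : 1 ≤ ℓ₀) (hℓ₀K : ℓ₀ ≤ K)
    (hM1 : cfQ α (K-1) ≤ M) (hM2 : M < cfQ α K)
    (b : ℕ → ℕ → ℕ) (hb : ∀ N ≤ M, IsOstrowski α K (b N) N) :
    let f : ℕ → ℕ := fun N => ∑ ℓ ∈ Finset.range K,
      (if ℓ = ℓ₀ - 1 then cfA α ℓ₀ - b N ℓ else b N ℓ) * cfQ α ℓ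
    let Mplus := (Finset.range (M+1)).filter
      (fun N => (cfA α ℓ₀ : ℝ) / 2 ≤ (b N (ℓ₀ - 1) : ℝ))
    let Mminus := (Finset.range (M+1)).filter
      (fun N => (b N (ℓ₀ - 1) : ℝ) ≤ (cfA α ℓ₀ : ℝ) / 2)
    (∀ N ∈ Mplus, f N ∈ Mminus) ∧ Set.InjOn f ↑Mplus ∧ (M : ℝ) / 2 ≤ (Mminus.card : ℝ) := by
  intro f Mplus Mminus
  have hA : ∀ j, 1 ≤ j → 1 ≤ cfA α j := fun j hj => my_cfA_pos hirr hα hj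
  have haℓ₀ : 1 ≤ cfA α ℓ₀ := hA ℓ₀ hℓ₀
  have hl0K : ℓ₀ - 1 < K := by omega
  have hmem : ∀ N, N ∈ Mplus ↔ N ≤ M ∧ cfA α ℓ₀ ≤ 2 * b N (ℓ₀-1) := by
    intro N
    simp only [Mplus, Finset.mem_filter, Finset.mem_range]
    constructor
    · rintro ⟨h1, h2⟩
      refine ⟨by omega, ?_⟩
      have : (cfA α ℓ₀ : ℝ) ≤ 2 * (b N (ℓ₀-1) : ℝ) := by linarith
      exact_mod_cast this
    · rintro ⟨h1, h2⟩
      refine ⟨by omega, ?_⟩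
      have : (cfA α ℓ₀ : ℝ) ≤ 2 * (b N (ℓ₀-1) : ℝ) := by exact_mod_cast h2
      linarith
  have key : ∀ N ∈ Mplus, f N ≤ M ∧
      ∀ ℓ < K, b (f N) ℓ = (if ℓ = ℓ₀ - 1 then cfA α ℓ₀ - b N ℓ else b N ℓ) := by
    intro N hN
    obtain ⟨h1, h2⟩ := (hmem N).mp hN
    exact my_reflect hα hirr K ℓ₀ M hK hℓ₀ hℓ₀K b hb N h1 h2
      (fun ℓ => if ℓ = ℓ₀ - 1 then cfA α ℓ₀ - b N ℓ else b N ℓ) (fun ℓ => rfl)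
  have part1 : ∀ N ∈ Mplus, f N ∈ Mminus := by
    intro N hN
    obtain ⟨hle, hdig⟩ := key N hN
    obtain ⟨h1, h2⟩ := (hmem N).mp hN
    have hd := hdig (ℓ₀ - 1) hl0K
    rw [if_pos rfl] at hd
    simp only [Mminus, Finset.mem_filter, Finset.mem_range]
    refine ⟨by omega, ?_⟩
    rw [hd]
    have hble : b N (ℓ₀ - 1) ≤ cfA α ℓ₀ := by
      have := ((hb N h1).2.1) (ℓ₀ - 1) hl0K
      rwa [Nat.sub_add_cancel hℓ₀] at this
    have hnat : 2 * (cfA α ℓ₀ - b N (ℓ₀-1)) ≤ cfA α ℓ₀ := by omega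
    have : (2:ℝ) * ((cfA α ℓ₀ - b N (ℓ₀-1) : ℕ) : ℝ) ≤ (cfA α ℓ₀ : ℝ) := by
      exact_mod_cast hnat
    linarith
  have part2 : Set.InjOn f ↑Mplus := by
    intro N1 h1 N2 h2 heq
    rw [Finset.mem_coe] at h1 h2
    obtain ⟨hle1, hdig1⟩ := key N1 h1
    obtain ⟨hle2, hdig2⟩ := key N2 h2
    obtain ⟨hm1, hg1⟩ := (hmem N1).mp h1
    obtain ⟨hm2, hg2⟩ := (hmem N2).mp h2
    have hdigeq : ∀ ℓ < K, b N1 ℓ = b N2 ℓ := by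
      intro ℓ hℓ
      have e1 := hdig1 ℓ hℓ
      have e2 := hdig2 ℓ hℓ
      rw [heq, e2] at e1
      by_cases h : ℓ = ℓ₀ - 1
      · rw [if_pos h, if_pos h] at e1
        have hble1 : b N1 ℓ ≤ cfA α ℓ₀ := by
          have := ((hb N1 hm1).2.1) ℓ hℓ
          rw [h] at this ⊢
          rwa [Nat.sub_add_cancel hℓ₀] at this
        have hble2 : b N2 ℓ ≤ cfA α ℓ₀ := by
          have := ((hb N2 hm2).2.1) ℓ hℓ
          rw [h] at this ⊢
          rwa [Nat.sub_add_cancel hℓ₀] at this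
        omega
      · rw [if_neg h, if_neg h] at e1; omega
    have hN1 := (hb N1 hm1).1
    have hN2 := (hb N2 hm2).1
    rw [hN1, hN2]
    exact Finset.sum_congr rfl (fun ℓ hℓ => by
      rw [hdigeq ℓ (Finset.mem_range.mp hℓ)])
  refine ⟨part1, part2, ?_⟩
  have hsub : Finset.range (M+1) ⊆ Mplus ∪ Mminus := by
    intro N hN
    rw [Finset.mem_union]
    simp only [Mplus, Mminus, Finset.mem_filter]
    rcases le_total ((cfA α ℓ₀ : ℝ) / 2) ((b N (ℓ₀ - 1) : ℝ)) with h | h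
    · exact Or.inl ⟨hN, h⟩
    · exact Or.inr ⟨hN, h⟩
  have hcard1 : M + 1 ≤ Mplus.card + Mminus.card := by
    calc M + 1 = (Finset.range (M+1)).card := (Finset.card_range _).symm
    _ ≤ (Mplus ∪ Mminus).card := Finset.card_le_card hsub
    _ ≤ Mplus.card + Mminus.card := Finset.card_union_le _ _
  have hcard2 : Mplus.card ≤ Mminus.card :=
    Finset.card_le_card_of_injOn f part1 part2
  have : (M:ℝ) + 1 ≤ 2 * (Mminus.card : ℝ) := by
    have : M + 1 ≤ 2 * Mminus.card := by omega
    exact_mod_cast this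
  linarith
end

section
/- Suppose for an irrational α and a function ψ the reflection identity |log P_N(α) + log P_{q_K−N−1}(α) − log q_K| ≤ E_K holds for all 0 ≤ N < q_K, where E_K + log q_K < ψ(K) for all large K. If limsup_{K→∞} #{0 ≤ N < q_K : log P_N(α) ≤ −2ψ(K)}/q_K ≥ 1/2, then also limsup_{K→∞} #{0 ≤ N < q_K : log P_N(α) ≥ ψ(K)}/q_K ≥ 1/2. -/
open Real Filter MeasureTheory

theorem reflection_transfer (α : ℝ) (hα : α ∈ Set.Ioo (0:ℝ) 1) (hirr : Irrational α)
    (ψ E : ℕ → ℝ)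
    (hrefl : ∀ K : ℕ, ∀ N < cfQ α K,
      |Real.log (sudler α N) + Real.log (sudler α (cfQ α K - N - 1))
        - Real.log (cfQ α K : ℝ)| ≤ E K)
    (hE : ∀ᶠ K in Filter.atTop, E K + Real.log (cfQ α K : ℝ) < ψ K)
    (hlim : (1:ℝ)/2 ≤ Filter.limsup (fun K : ℕ =>
      (((Finset.range (cfQ α K)).filter
        (fun N => Real.log (sudler α N) ≤ -(2 * ψ K))).card : ℝ) / (cfQ α K : ℝ))
      Filter.atTop) :
    (1:ℝ)/2 ≤ Filter.limsup (fun K : ℕ =>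
      (((Finset.range (cfQ α K)).filter
        (fun N => ψ K ≤ Real.log (sudler α N))).card : ℝ) / (cfQ α K : ℝ))
      Filter.atTop := by

  have hmain : ∀ᶠ K in Filter.atTop,
      (((Finset.range (cfQ α K)).filter
        (fun N => Real.log (sudler α N) ≤ -(2 * ψ K))).card : ℝ) / (cfQ α K : ℝ) ≤
      (((Finset.range (cfQ α K)).filter
        (fun N => ψ K ≤ Real.log (sudler α N))).card : ℝ) / (cfQ α K : ℝ) := by
    filter_upwards [hE] with K hK
    rcases Nat.eq_zero_or_pos (cfQ α K) with hq | hq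
    · simp [hq]
    · have hq1 : (1:ℝ) ≤ (cfQ α K : ℝ) := by exact_mod_cast hq
      have hlogq : 0 ≤ Real.log (cfQ α K : ℝ) := Real.log_nonneg hq1
      have hcard : ((Finset.range (cfQ α K)).filter
          (fun N => Real.log (sudler α N) ≤ -(2 * ψ K))).card ≤
          ((Finset.range (cfQ α K)).filter
          (fun N => ψ K ≤ Real.log (sudler α N))).card := by
        apply Finset.card_le_card_of_injOn (fun N => cfQ α K - N - 1)
        · intro N hN
          simp only [Finset.mem_coe, Finset.mem_filter, Finset.mem_range] at hN ⊢
          obtain ⟨hNlt, hNsmall⟩ := hN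
          refine ⟨by omega, ?_⟩
          have h2 := abs_le.mp (hrefl K N hNlt)
          linarith [h2.1, h2.2]
        · intro a ha b hb hab
          simp only [Finset.coe_filter, Set.mem_setOf_eq, Finset.mem_range] at ha hb
          simp only [] at hab
          omega
      have hqpos : (0:ℝ) < (cfQ α K : ℝ) := by exact_mod_cast hq
      apply div_le_div_of_nonneg_right ?_ hqpos.le
      exact_mod_cast hcard
  refine le_trans hlim (Filter.limsup_le_limsup hmain ?_ ?_)
  · exact Filter.isCoboundedUnder_le_of_le Filter.atTop (x := 0) fun K => by positivity
  · refine ⟨1, Filter.eventually_map.mpr (Filter.Eventually.of_forall fun K => ?_)⟩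
    rcases Nat.eq_zero_or_pos (cfQ α K) with h | h
    · simp [h]
    · rw [div_le_one (by exact_mod_cast h)]
      exact_mod_cast (Finset.card_filter_le _ _).trans_eq (Finset.card_range _)
end
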